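/- arXiv:0903.3487 — 3 statements merged into one kernel-verified Lean document; each statement's English description precedes it below -/
import Mathlib

section
/- Low-SNR minimizer of the lower bound (Remark 2, first part): Let σ²>0, ρ∈[0,1), P,N>0 with P/N ≤ ρ²/(2(1-ρ)(1+2ρ)). Then for every ρ̂∈[0,1], max{ξ(σ²,ρ,P,N,1), ψ(σ²,ρ,P,N,1)} ≤ max{ξ(σ²,ρ,P,N,ρ̂), ψ(σ²,ρ,P,N,ρ̂)}; that is, the minimum over ρ̂∈[0,1] of max{ξ,ψ} is achieved at ρ̂=1. -/
open Classical in
/-- The function ξ(σ², ρ, P, N, ρ̂); the case distinction `P/N ≤ ρ/(1-ρ²)` is written in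
the equivalent product form `P(1-ρ²) ≤ Nρ`. -/
noncomputable def xiFn (σsq ρ P N ρh : ℝ) : ℝ :=
  if P * (1 - ρ ^ 2) ≤ N * ρ then
    (1 / 2) * (N * σsq * (1 + ρ) / (N + 2 * P * (1 + ρh)) + σsq * (1 - ρ))
  else σsq * Real.sqrt (N * (1 - ρ ^ 2) / (N + 2 * P * (1 + ρh)))

/-- The function ψ(σ², ρ, P, N, ρ̂). -/
noncomputable def psiFn (σsq ρ P N ρh : ℝ) : ℝ :=
  σsq * N * (1 - ρ ^ 2) / (N + P * (1 - ρh ^ 2))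

/-- **Remark 2, first part (low-SNR minimizer of the lower bound).**
If `P/N ≤ ρ²/(2(1-ρ)(1+2ρ))`, then the minimum over `ρ̂ ∈ [0,1]` of
`max{ξ(σ²,ρ,P,N,ρ̂), ψ(σ²,ρ,P,N,ρ̂)}` is achieved at `ρ̂ = 1`. -/
theorem lowSNR_minimizer_at_one
    (σsq ρ P N : ℝ)
    (hσ : 0 < σsq) (hρ0 : 0 ≤ ρ) (hρ1 : ρ < 1)
    (hP : 0 < P) (hN : 0 < N)
    (hsnr : P / N ≤ ρ ^ 2 / (2 * (1 - ρ) * (1 + 2 * ρ))) :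
    ∀ ρh ∈ Set.Icc (0 : ℝ) 1,
      max (xiFn σsq ρ P N 1) (psiFn σsq ρ P N 1) ≤
        max (xiFn σsq ρ P N ρh) (psiFn σsq ρ P N ρh) := by
  intro ρh hρh
  obtain ⟨h0, h1⟩ := hρh
  have hden : (0:ℝ) < 2 * (1 - ρ) * (1 + 2 * ρ) := by nlinarith
  -- key: 2P(1-ρ)(1+2ρ) ≤ Nρ²
  have hkey : 2 * P * (1 - ρ) * (1 + 2 * ρ) ≤ N * ρ ^ 2 := by
    rw [div_le_div_iff₀ hN hden] at hsnr
    nlinarith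
  -- branch condition
  have hcond : P * (1 - ρ ^ 2) ≤ N * ρ := by
    nlinarith [mul_nonneg (mul_nonneg hN.le hρ0) (sub_nonneg.2 hρ1.le),
      mul_nonneg (mul_nonneg hP.le (sub_nonneg.2 hρ1.le)) (by linarith : (0:ℝ) ≤ 1 + 3 * ρ)]
  have hd1 : (0:ℝ) < N + 2 * P * (1 + 1) := by nlinarith
  have hdh : (0:ℝ) < N + 2 * P * (1 + ρh) := by nlinarith
  have hxi1 : xiFn σsq ρ P N 1 =
      (1 / 2) * (N * σsq * (1 + ρ) / (N + 2 * P * (1 + 1)) + σsq * (1 - ρ)) := by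
    simp [xiFn, hcond]
  have hxih : xiFn σsq ρ P N ρh =
      (1 / 2) * (N * σsq * (1 + ρ) / (N + 2 * P * (1 + ρh)) + σsq * (1 - ρ)) := by
    simp [xiFn, hcond]
  -- ψ(1) ≤ ξ(1)
  have hpsi1 : psiFn σsq ρ P N 1 = σsq * (1 - ρ ^ 2) := by
    simp [psiFn]
    field_simp
  have hψξ : psiFn σsq ρ P N 1 ≤ xiFn σsq ρ P N 1 := by
    rw [hpsi1, hxi1, div_add' _ _ _ (ne_of_gt hd1), mul_div_assoc', le_div_iff₀ hd1]
    nlinarith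
  -- ξ(1) ≤ ξ(ρh)
  have hξmono : xiFn σsq ρ P N 1 ≤ xiFn σsq ρ P N ρh := by
    rw [hxi1, hxih]
    have hnum : (0:ℝ) ≤ N * σsq * (1 + ρ) := by positivity
    have := div_le_div_of_nonneg_left hnum hdh (by nlinarith : N + 2 * P * (1 + ρh) ≤ N + 2 * P * (1 + 1))
    linarith
  calc max (xiFn σsq ρ P N 1) (psiFn σsq ρ P N 1) = xiFn σsq ρ P N 1 :=
        max_eq_left hψξ
    _ ≤ xiFn σsq ρ P N ρh := hξmono
    _ ≤ max (xiFn σsq ρ P N ρh) (psiFn σsq ρ P N ρh) := le_max_left _ _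
end

section
/- High-SNR behavior of the lower bound (Remark 2, second part): Let σ²>0, ρ∈[0,1), N>0. Then liminf as P→∞ of √(P/N)·(inf over ρ̂∈[0,1] of max{ξ(σ²,ρ,P,N,ρ̂), ψ(σ²,ρ,P,N,ρ̂)}) ≥ σ²·√((1-ρ²)/4). -/
set_option maxHeartbeats 1000000


/-- **Remark 2, second part (high-SNR behaviour of the lower bound).**
`liminf_{P→∞} √(P/N) · inf_{ρ̂∈[0,1]} max{ξ, ψ} ≥ σ²·√((1-ρ²)/4)`. -/
theorem highSNR_lower_bound_asymptotics
    (σsq ρ N : ℝ)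
    (hσ : 0 < σsq) (hρ0 : 0 ≤ ρ) (hρ1 : ρ < 1) (hN : 0 < N) :
    σsq * Real.sqrt ((1 - ρ ^ 2) / 4) ≤
      Filter.liminf (fun P : ℝ =>
        Real.sqrt (P / N) *
          sInf ((fun ρh => max (xiFn σsq ρ P N ρh) (psiFn σsq ρ P N ρh)) '' Set.Icc 0 1))
        Filter.atTop := by
  have hρ2 : 0 < 1 - ρ ^ 2 := by nlinarith
  set f : ℝ → ℝ := fun P =>
    Real.sqrt (P / N) *
      sInf ((fun ρh => max (xiFn σsq ρ P N ρh) (psiFn σsq ρ P N ρh)) '' Set.Icc 0 1) with hf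
  set g : ℝ → ℝ := fun P => σsq * Real.sqrt (P * (1 - ρ ^ 2) / (N + 4 * P)) with hg
  set C : ℝ := σsq * Real.sqrt (1 - ρ ^ 2) + σsq * (1 - ρ ^ 2) with hC
  -- g tends to the target constant
  have hgt : Filter.Tendsto g Filter.atTop (nhds (σsq * Real.sqrt ((1 - ρ ^ 2) / 4))) := by
    have h0 : Filter.Tendsto (fun P : ℝ => N / P + 4) Filter.atTop (nhds 4) := by
      have := Filter.Tendsto.div_atTop (tendsto_const_nhds (α := ℝ) (x := N)) Filter.tendsto_id
      simpa using this.add (tendsto_const_nhds (x := (4:ℝ)))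
    have h1 : Filter.Tendsto (fun P : ℝ => (1 - ρ ^ 2) / (N / P + 4)) Filter.atTop
        (nhds ((1 - ρ ^ 2) / 4)) :=
      (tendsto_const_nhds).div h0 (by norm_num)
    have h2 : Filter.Tendsto (fun P : ℝ => P * (1 - ρ ^ 2) / (N + 4 * P)) Filter.atTop
        (nhds ((1 - ρ ^ 2) / 4)) := by
      refine h1.congr' ?_
      filter_upwards [Filter.eventually_gt_atTop (0:ℝ)] with P hP
      have hden : N + 4 * P > 0 := by linarith
      field_simp
    exact ((Real.continuous_sqrt.tendsto _).comp h2).const_mul σsq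
  -- eventually g ≤ f and f ≤ C
  have hev : ∀ᶠ P in Filter.atTop, g P ≤ f P ∧ f P ≤ C := by
    filter_upwards [Filter.eventually_gt_atTop (0:ℝ),
      Filter.eventually_gt_atTop (N * ρ / (1 - ρ ^ 2))] with P hP0 hP1
    have hcond : ¬ (P * (1 - ρ ^ 2) ≤ N * ρ) := by
      have := (div_lt_iff₀ hρ2).mp hP1
      linarith [this]
    -- helper for combining square roots
    have hsq : ∀ x : ℝ, 0 < x →
        Real.sqrt (P / N) * Real.sqrt (N * (1 - ρ ^ 2) / x)
          = Real.sqrt (P * (1 - ρ ^ 2) / x) := by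
      intro x hx
      rw [← Real.sqrt_mul (by positivity)]
      congr 1
      field_simp
    set S := ((fun ρh => max (xiFn σsq ρ P N ρh) (psiFn σsq ρ P N ρh)) '' Set.Icc 0 1) with hS
    set b : ℝ := σsq * Real.sqrt (N * (1 - ρ ^ 2) / (N + 4 * P)) with hb
    have hlow : ∀ y ∈ S, b ≤ y := by
      rintro y ⟨ρh, ⟨h0, h1⟩, rfl⟩
      refine le_trans ?_ (le_max_left _ _)
      rw [xiFn, if_neg hcond]
      refine mul_le_mul_of_nonneg_left (Real.sqrt_le_sqrt ?_) hσ.le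
      apply div_le_div_of_nonneg_left (by nlinarith) (by nlinarith) (by nlinarith)
    constructor
    · -- g P ≤ f P
      have hbS : b ≤ sInf S := le_csInf ⟨_, ⟨0, by simp, rfl⟩⟩ hlow
      have hgb : g P = Real.sqrt (P / N) * b := by
        rw [hb, hg]
        simp only
        rw [← hsq (N + 4 * P) (by positivity)]
        ring
      rw [hf]
      simp only
      rw [← hS, hgb]
      exact mul_le_mul_of_nonneg_left hbS (Real.sqrt_nonneg _)
    · -- f P ≤ C
      have hmem : max (xiFn σsq ρ P N 0) (psiFn σsq ρ P N 0) ∈ S :=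
        ⟨0, by simp, rfl⟩
      have hIle : sInf S ≤ max (xiFn σsq ρ P N 0) (psiFn σsq ρ P N 0) :=
        csInf_le ⟨b, hlow⟩ hmem
      have hstep : f P ≤ Real.sqrt (P / N) * max (xiFn σsq ρ P N 0) (psiFn σsq ρ P N 0) := by
        rw [hf]; simp only; rw [← hS]
        exact mul_le_mul_of_nonneg_left hIle (Real.sqrt_nonneg _)
      refine hstep.trans ?_
      rw [mul_max_of_nonneg _ _ (Real.sqrt_nonneg _)]
      have hA : Real.sqrt (P / N) * xiFn σsq ρ P N 0 ≤ σsq * Real.sqrt (1 - ρ ^ 2) := by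
        rw [xiFn, if_neg hcond]
        rw [show Real.sqrt (P / N) * (σsq * Real.sqrt (N * (1 - ρ ^ 2) / (N + 2 * P * (1 + 0))))
            = σsq * (Real.sqrt (P / N) * Real.sqrt (N * (1 - ρ ^ 2) / (N + 2 * P * (1 + 0))))
            by ring]
        rw [hsq (N + 2 * P * (1 + 0)) (by positivity)]
        refine mul_le_mul_of_nonneg_left (Real.sqrt_le_sqrt ?_) hσ.le
        rw [div_le_iff₀ (by positivity)]
        nlinarith
      have hB : Real.sqrt (P / N) * psiFn σsq ρ P N 0 ≤ σsq * (1 - ρ ^ 2) := by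
        rw [psiFn]
        set t : ℝ := Real.sqrt (P / N) with ht
        have ht0 : 0 ≤ t := Real.sqrt_nonneg _
        have ht2 : t ^ 2 = P / N := Real.sq_sqrt (by positivity)
        have htP : t ^ 2 * N = P := by rw [ht2]; field_simp
        have hkey : t * N ≤ N + P := by nlinarith
        have hden : (0:ℝ) < N + P * (1 - 0 ^ 2) := by norm_num; positivity
        rw [← mul_div_assoc, div_le_iff₀ hden]
        have hexp : σsq * (1 - ρ ^ 2) * (N + P * (1 - 0 ^ 2)) = σsq * (1 - ρ ^ 2) * (N + P) := by
          norm_num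
        rw [hexp]
        have : t * (σsq * N * (1 - ρ ^ 2)) = σsq * (1 - ρ ^ 2) * (t * N) := by ring
        rw [this]
        exact mul_le_mul_of_nonneg_left hkey (by positivity)
      have hCnn : σsq * Real.sqrt (1 - ρ ^ 2) ≥ 0 := by positivity
      have hCnn2 : σsq * (1 - ρ ^ 2) ≥ 0 := by positivity
      rw [hC]
      exact max_le (by linarith) (by linarith)
  -- conclude via liminf monotonicity
  have hu : Filter.IsBoundedUnder (· ≥ ·) Filter.atTop g := by
    refine ⟨0, ?_⟩
    rw [Filter.eventually_map]
    exact Filter.Eventually.of_forall fun P => by positivity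
  have hv : Filter.IsCoboundedUnder (· ≥ ·) Filter.atTop f :=
    Filter.isCoboundedUnder_ge_of_eventually_le _ (hev.mono fun P h => h.2)
  calc σsq * Real.sqrt ((1 - ρ ^ 2) / 4) = Filter.liminf g Filter.atTop := hgt.liminf_eq.symm
    _ ≤ Filter.liminf f Filter.atTop :=
        Filter.liminf_le_liminf (hev.mono fun P h => h.1) hu hv
end

section
/- Nonnegativity of the estimator coefficients (Lemma 4): Let σ²>0, ρ∈(0,1], and let (D1,D2) ∈ 𝒟3 with 0<D1<σ² and 0<D2. Define α = σ²(√(σ²−D1) − ρ√(σ²−D2))/(D2·√(σ²−D1)) and β = (√((σ²−D1)(σ²−D2)) − ρ(σ²−D2))/D2. Then α ≥ 0 and ρ − β ≥ 0. -/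
/-- Region 𝒟₃ of distortion pairs. -/
def regD3 (σsq ρ : ℝ) : Set (ℝ × ℝ) :=
  {p | (0 ≤ p.1 ∧ p.1 ≤ σsq * (1 - ρ ^ 2) ∧
        (σsq * (1 - ρ ^ 2) - p.1) * σsq / (σsq - p.1) ≤ p.2 ∧
        p.2 < σsq * (1 - ρ ^ 2) + ρ ^ 2 * p.1) ∨
       (σsq * (1 - ρ ^ 2) < p.1 ∧ p.1 ≤ σsq ∧
        (p.1 - σsq * (1 - ρ ^ 2)) / ρ ^ 2 < p.2 ∧ p.2 < σsq * (1 - ρ ^ 2) + ρ ^ 2 * p.1)}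

/-- **Lemma 4 (nonnegativity of the estimator coefficients).**
For `(D1, D2) ∈ 𝒟₃`, the coefficients
`α = σ²(√(σ²−D1) − ρ√(σ²−D2))/(D2·√(σ²−D1))` and
`β = (√((σ²−D1)(σ²−D2)) − ρ(σ²−D2))/D2` satisfy `α ≥ 0` and `ρ − β ≥ 0`. -/
theorem estimator_coefficients_nonneg
    (σsq ρ D1 D2 : ℝ)
    (hσ : 0 < σsq) (hρ0 : 0 < ρ) (hρ1 : ρ ≤ 1)
    (hmem : (D1, D2) ∈ regD3 σsq ρ)
    (hD1 : 0 < D1) (hD1' : D1 < σsq) (hD2 : 0 < D2) :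
    0 ≤ σsq * (Real.sqrt (σsq - D1) - ρ * Real.sqrt (σsq - D2)) /
        (D2 * Real.sqrt (σsq - D1)) ∧
    0 ≤ ρ - (Real.sqrt ((σsq - D1) * (σsq - D2)) - ρ * (σsq - D2)) / D2 := by
  have hρ2 : 0 < ρ ^ 2 := by positivity
  obtain ⟨hd2lt, h1, h2⟩ : D2 < σsq ∧ ρ ^ 2 * (σsq - D2) ≤ (σsq - D1) ∧
      (σsq - D1) * (σsq - D2) ≤ ρ ^ 2 * σsq ^ 2 := by
    rcases hmem with ⟨_, ha, hb, hc⟩ | ⟨ha, _, hb, hc⟩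
    · have hb' : (σsq * (1 - ρ ^ 2) - D1) * σsq ≤ D2 * (σsq - D1) := by
        rw [div_le_iff₀ (by linarith : (0:ℝ) < σsq - D1)] at hb
        linarith
      exact ⟨by nlinarith, by nlinarith, by nlinarith⟩
    · have hb' : D1 - σsq * (1 - ρ ^ 2) < D2 * ρ ^ 2 := by
        rw [div_lt_iff₀ hρ2] at hb
        exact hb
      exact ⟨by nlinarith, by nlinarith, by nlinarith⟩
  have hs1 : 0 < σsq - D1 := by linarith
  have hs2 : 0 < σsq - D2 := by linarith
  constructor
  · apply div_nonneg _ (by positivity)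
    apply mul_nonneg hσ.le
    have heq : ρ * Real.sqrt (σsq - D2) = Real.sqrt (ρ ^ 2 * (σsq - D2)) := by
      rw [Real.sqrt_mul (by positivity), Real.sqrt_sq hρ0.le]
    rw [heq]
    linarith [Real.sqrt_le_sqrt h1]
  · rw [sub_nonneg, div_le_iff₀ hD2]
    have hsq : Real.sqrt ((σsq - D1) * (σsq - D2)) ≤ ρ * σsq := by
      have heq : ρ * σsq = Real.sqrt (ρ ^ 2 * σsq ^ 2) := by
        rw [Real.sqrt_mul (by positivity), Real.sqrt_sq hρ0.le, Real.sqrt_sq hσ.le]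
      rw [heq]
      exact Real.sqrt_le_sqrt h2
    nlinarith
end
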